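/- Let P be a nonconstant polynomial with complex coefficients, viewed as the map z ↦ P(z) on ℂ, and let X be a bounded subset of ℂ. Then P⁻¹(realm(X)) = realm(P⁻¹(X)). -/

import Mathlib

open Polynomial Bornology Set

/-- The *filling* of a set `X ⊆ ℂ`: the union of `X` with all bounded connected
components of `ℂ \ X`. -/
def fill (X : Set ℂ) : Set ℂ :=
  {z : ℂ | Bornology.IsBounded (connectedComponentIn Xᶜ z)}

/-- `realm X` is the filling of the closure of `X`. -/
def realm (X : Set ℂ) : Set ℂ := fill (closure X)

lemma poly_isOpenMap (P : Polynomial ℂ) (hP : 0 < P.natDegree) :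
    IsOpenMap (fun z : ℂ => P.eval z) := by
  have h := (AnalyticOnNhd.eval_polynomial (𝕜 := ℂ) P).is_constant_or_isOpen
    isPreconnected_univ
  rcases h with ⟨w, hw⟩ | h
  · exfalso
    have : P = Polynomial.C w := Polynomial.funext fun r => by
      simpa using hw r (Set.mem_univ r)
    simp [this] at hP
  · intro s hs
    exact h s (Set.subset_univ s) hs

lemma poly_bounded_preimage (P : Polynomial ℂ) (hP : 0 < P.natDegree) {S : Set ℂ}
    (hS : IsBounded S) : IsBounded ((fun z : ℂ => P.eval z) ⁻¹' S) := by
  obtain ⟨r, hr⟩ := hS.subset_closedBall 0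
  have hdeg : 0 < P.degree := Polynomial.natDegree_pos_iff_degree_pos.mp hP
  have ht : Filter.Tendsto (fun z : ℂ => ‖P.eval z‖) (Bornology.cobounded ℂ) Filter.atTop :=
    P.tendsto_norm_atTop hdeg tendsto_norm_cobounded_atTop
  have hmem : {z : ℂ | r < ‖P.eval z‖} ∈ Bornology.cobounded ℂ :=
    ht (Filter.eventually_gt_atTop r)
  have hb : IsBounded {z : ℂ | r < ‖P.eval z‖}ᶜ :=
    Bornology.IsCobounded.compl hmem
  refine hb.subset fun z hz => ?_
  have : P.eval z ∈ Metric.closedBall 0 r := hr hz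
  simp only [Metric.mem_closedBall, Complex.dist_eq, sub_zero] at this
  simp only [Set.mem_compl_iff, Set.mem_setOf_eq, not_lt]
  exact this

lemma fill_preimage (P : Polynomial ℂ) (hP : 0 < P.natDegree) {Y : Set ℂ} (hY : IsClosed Y)
    (z : ℂ) :
    IsBounded (connectedComponentIn ((fun z : ℂ => P.eval z) ⁻¹' Y)ᶜ z) ↔
      IsBounded (connectedComponentIn Yᶜ (P.eval z)) := by
  set f : ℂ → ℂ := fun z : ℂ => P.eval z with hf
  have hfc : Continuous f := P.continuous
  have hfo : IsOpenMap f := poly_isOpenMap P hP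
  have hUo : IsOpen Yᶜ := hY.isOpen_compl
  have hpre : (f ⁻¹' Y)ᶜ = f ⁻¹' Yᶜ := rfl
  rw [hpre]
  by_cases hz : z ∈ f ⁻¹' Yᶜ
  · set C := connectedComponentIn (f ⁻¹' Yᶜ) z with hC
    set D := connectedComponentIn Yᶜ (f z) with hD
    have hCsub : C ⊆ f ⁻¹' Yᶜ := connectedComponentIn_subset _ _
    have himg : f '' C ⊆ D := by
      apply IsPreconnected.subset_connectedComponentIn
      · exact isPreconnected_connectedComponentIn.image f hfc.continuousOn
      · exact ⟨z, mem_connectedComponentIn hz, rfl⟩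
      · exact Set.image_subset_iff.mpr hCsub
    constructor
    · intro hCb
      -- show D = f '' C, which is bounded
      have hCcl : IsCompact (closure C) := hCb.isCompact_closure
      have hCo : IsOpen C := (hUo.preimage hfc).connectedComponentIn
      have hfCo : IsOpen (f '' C) := hfo _ hCo
      -- frontier C ⊆ f ⁻¹' Y
      have hfr : frontier C ⊆ (f ⁻¹' Yᶜ)ᶜ := by
        intro x hx
        by_contra hxU
        simp only [Set.mem_compl_iff, not_not] at hxU
        have hxo : IsOpen (connectedComponentIn (f ⁻¹' Yᶜ) x) :=
          (hUo.preimage hfc).connectedComponentIn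
        have hxmem : x ∈ connectedComponentIn (f ⁻¹' Yᶜ) x := mem_connectedComponentIn hxU
        -- this component meets C since x ∈ closure C
        have hxcl : x ∈ closure C := hx.1
        obtain ⟨y, hy1, hy2⟩ := mem_closure_iff.mp hxcl _ hxo hxmem
        have : connectedComponentIn (f ⁻¹' Yᶜ) x = C := by
          rw [connectedComponentIn_eq (x := x) (y := y) hy1]
          exact (connectedComponentIn_eq hy2).symm
        have hxC : x ∈ C := this ▸ hxmem
        exact hx.2 (by rwa [hCo.interior_eq])
      -- closure (f '' C) ⊆ f '' closure C
      have hclim : closure (f '' C) ⊆ f '' closure C := by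
        apply closure_minimal (Set.image_mono (f := f) subset_closure)
        exact (hCcl.image hfc).isClosed
      -- frontier (f '' C) ⊆ f '' frontier C ⊆ Y
      have hfrim : frontier (f '' C) ⊆ Y := by
        intro w hw
        have hw1 : w ∈ f '' closure C := hclim hw.1
        have hw2 : w ∉ f '' C := by have h2 := hw.2; rwa [hfCo.interior_eq] at h2
        obtain ⟨x, hx1, rfl⟩ := hw1
        have hxC : x ∉ C := fun h => hw2 ⟨x, h, rfl⟩
        have : x ∈ frontier C := ⟨hx1, by rwa [hCo.interior_eq]⟩
        have := hfr this
        simpa using this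
      -- D ⊆ closure (f '' C), hence D ⊆ f '' C
      have hDsub : D ⊆ f '' C := by
        have hDconn : IsPreconnected D := isPreconnected_connectedComponentIn
        have hDU : D ⊆ Yᶜ := connectedComponentIn_subset _ _
        have hsub : D ⊆ f '' C ∪ (closure (f '' C))ᶜ := by
          intro d hd
          by_cases hdc : d ∈ closure (f '' C)
          · left
            by_contra hdf
            exact (hDU hd) (hfrim ⟨hdc, by rwa [hfCo.interior_eq]⟩)
          · exact Or.inr hdc
        by_contra hnot
        obtain ⟨d, hd, hdn⟩ := Set.not_subset.mp hnot
        have := hDconn (f '' C) (closure (f '' C))ᶜ hfCo isClosed_closure.isOpen_compl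
          hsub ⟨f z, mem_connectedComponentIn (hz), ⟨z, mem_connectedComponentIn hz, rfl⟩⟩
          ⟨d, hd, (hsub hd).resolve_left hdn⟩
        obtain ⟨w, -, hw1, hw2⟩ := this
        exact hw2 (subset_closure hw1)
      have : IsBounded (f '' closure C) := (hCcl.image hfc).isBounded
      exact this.subset (hDsub.trans (Set.image_mono (f := f) subset_closure))
    · intro hDb
      have : C ⊆ f ⁻¹' D := fun x hx => himg ⟨x, hx, rfl⟩
      exact (poly_bounded_preimage P hP hDb).subset this
  · rw [connectedComponentIn_eq_empty hz, connectedComponentIn_eq_empty (by simpa using hz)]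

/-- For a nonconstant polynomial `P` over `ℂ` and a bounded set `X ⊆ ℂ`,
`P⁻¹(realm X) = realm (P⁻¹ X)`. -/
theorem preimage_realm_eq_realm_preimage (P : Polynomial ℂ) (hP : 0 < P.natDegree)
    (X : Set ℂ) (hX : Bornology.IsBounded X) :
    (fun z : ℂ => P.eval z) ⁻¹' (realm X) = realm ((fun z : ℂ => P.eval z) ⁻¹' X) := by
  have hcl : closure ((fun z : ℂ => P.eval z) ⁻¹' X) = (fun z : ℂ => P.eval z) ⁻¹' closure X :=
    ((poly_isOpenMap P hP).preimage_closure_eq_closure_preimage P.continuous X).symm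
  unfold realm fill
  rw [hcl]
  ext z
  simp only [Set.mem_preimage, Set.mem_setOf_eq]
  exact (fill_preimage P hP isClosed_closure z).symm
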